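/- If one set Ω_k in the cyclic family of maximal output admissible sets is a polyhedron defined by finitely many linear inequalities, then every Ω_i, i ≠ k, is also a polyhedron defined by finitely many inequalities; specifically Ω_i is determined by at most m + (N−1)q inequalities, where m is the number of rows defining Ω_k and q bounds the number of rows of each S_j. -/
import Mathlib


open Matrix

lemma pad_poly {n t M : ℕ} (h : t ≤ M) (G : Matrix (Fin t) (Fin n) ℝ) :
    ∃ Hi : Matrix (Fin M) (Fin n) ℝ,
      {x : Fin n → ℝ | ∀ r, (Hi *ᵥ x) r ≤ 1} = {x : Fin n → ℝ | ∀ r, (G *ᵥ x) r ≤ 1} := by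
  refine ⟨fun r => if hr : (r : ℕ) < t then G ⟨r, hr⟩ else 0, ?_⟩
  ext x
  simp only [Set.mem_setOf_eq, Matrix.mulVec]
  constructor
  · intro hx r
    have := hx ⟨r, lt_of_lt_of_le r.2 h⟩
    simpa [r.2] using this
  · intro hx r
    by_cases hr : (r : ℕ) < t
    · simpa [hr] using hx ⟨r, hr⟩
    · simp [hr]

/-- If one set `Ω_k` in the cyclic family of maximal output admissible sets is a polyhedron
`{x : H x ≤ 1}` with `H` having `m` rows, then every `Ω_i`, `i < N`, is a polyhedron
determined by at most `m + (N−1) q` inequalities, where `q` bounds the rows of each `S_j`. -/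
theorem stmt15 {n p q m N : ℕ}
    (A : ℕ → Matrix (Fin n) (Fin n) ℝ) (C : ℕ → Matrix (Fin p) (Fin n) ℝ)
    (S : ℕ → Matrix (Fin q) (Fin p) ℝ) (Ω : ℕ → Set (Fin n → ℝ))
    (hcyc : ∀ j < N, ∀ x : Fin n → ℝ,
      x ∈ Ω j ↔ (∀ i, (S j *ᵥ (C j *ᵥ x)) i ≤ 1) ∧ A j *ᵥ x ∈ Ω ((j + 1) % N))
    (k : ℕ) (hk : k < N) (H : Matrix (Fin m) (Fin n) ℝ)
    (hΩk : Ω k = {x | ∀ i, (H *ᵥ x) i ≤ 1}) :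
    ∀ i < N, ∃ Hi : Matrix (Fin (m + (N - 1) * q)) (Fin n) ℝ,
      Ω i = {x | ∀ r, (Hi *ᵥ x) r ≤ 1} := by
  have hN : 0 < N := lt_of_le_of_lt (Nat.zero_le k) hk
  have key : ∀ d : ℕ, ∀ j : ℕ, j < N → (j + d) % N = k →
      ∃ t : ℕ, t ≤ m + d * q ∧ ∃ G : Matrix (Fin t) (Fin n) ℝ,
        Ω j = {x | ∀ r, (G *ᵥ x) r ≤ 1} := by
    intro d
    induction d with
    | zero =>
      intro j hj hjk
      have : j = k := by rwa [Nat.add_zero, Nat.mod_eq_of_lt hj] at hjk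
      subst this
      exact ⟨m, Nat.le_add_right m (0 * q), H, hΩk⟩
    | succ d ih =>
      intro j hj hjk
      have hj' : (j + 1) % N < N := Nat.mod_lt _ hN
      have hjk' : ((j + 1) % N + d) % N = k := by
        rw [Nat.mod_add_mod, show j + 1 + d = j + (d + 1) by ring]
        exact hjk
      obtain ⟨t, ht, G, hG⟩ := ih ((j + 1) % N) hj' hjk'
      have hle : q + t ≤ m + (d + 1) * q := by
        calc q + t ≤ q + (m + d * q) := Nat.add_le_add_left ht q
          _ = m + (d + 1) * q := by ring
      refine ⟨q + t, hle, fun r =>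
        if hr : (r : ℕ) < q then (S j * C j) ⟨r, hr⟩
        else (G * A j) ⟨(r : ℕ) - q, by have := r.2; omega⟩, ?_⟩
      ext x
      rw [Set.mem_setOf_eq, hcyc j hj x, hG, Set.mem_setOf_eq]
      constructor
      · rintro ⟨h1, h2⟩ r
        show (fun j' => _) ⬝ᵥ x ≤ 1
        by_cases hr : (r : ℕ) < q
        · have := h1 ⟨r, hr⟩
          rw [Matrix.mulVec_mulVec] at this
          simpa [Matrix.mulVec, hr] using this
        · have := h2 ⟨(r : ℕ) - q, by have := r.2; omega⟩
          rw [Matrix.mulVec_mulVec] at this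
          simpa [Matrix.mulVec, hr] using this
      · intro hx
        constructor
        · intro i
          have := hx ⟨(i : ℕ), by omega⟩
          rw [Matrix.mulVec_mulVec]
          simpa [Matrix.mulVec, i.2] using this
        · intro r
          have := hx ⟨q + (r : ℕ), by have := r.2; omega⟩
          rw [Matrix.mulVec_mulVec]
          simpa [Matrix.mulVec] using this
  intro i hi
  set d := (k + N - i) % N with hd_def
  have hdlt : d < N := Nat.mod_lt _ hN
  have hik : (i + d) % N = k := by
    rw [hd_def, Nat.add_mod_mod, show i + (k + N - i) = k + N by omega,
      Nat.add_mod_right, Nat.mod_eq_of_lt hk]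
  obtain ⟨t, ht, G, hG⟩ := key d i hi hik
  have htM : t ≤ m + (N - 1) * q := by
    refine le_trans ht (Nat.add_le_add_left ?_ m)
    exact Nat.mul_le_mul_right q (by omega)
  obtain ⟨Hi, hHi⟩ := pad_poly htM G
  exact ⟨Hi, hG.trans hHi.symm⟩
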